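/- Let M, R be real 3×3 matrices, x ∈ ℝ³, k ∈ ℝ, and let w ∈ ℝ³ be the unique vector with w^× = P_a(M R), where P_a(A) := (A − Aᵀ)/2. Then tr( −R (x^× − k · P_a(M R)) M ) − 2 xᵀ w = −k ‖P_a(M R)‖_F². (This is the algebraic identity showing that the Lyapunov function V_R = tr((I₃ − R̃)M) + (1/k_ω)‖b̃_ω‖² has derivative −k_R ‖P_a(M R̃)‖_F² along the bias-coupled attitude error dynamics.) -/
import Mathlib


open Matrix

/-- The skew-symmetric matrix `x^×` with `x^× y = x × y`. -/
noncomputable def crossMat (x : Fin 3 → ℝ) : Matrix (Fin 3) (Fin 3) ℝ :=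
  !![0, -x 2, x 1; x 2, 0, -x 0; -x 1, x 0, 0]

/-- The anti-symmetric projection `P_a(A) := (A − Aᵀ)/2`. -/
noncomputable def antiProj (A : Matrix (Fin 3) (Fin 3) ℝ) : Matrix (Fin 3) (Fin 3) ℝ :=
  (1/2 : ℝ) • (A - Aᵀ)

/-- For 3×3 matrices `M`, `R`, a vector `x`, a scalar `k`, and the unique `w` with
`w^× = P_a(M R)`, one has
`tr(−R (x^× − k P_a(M R)) M) − 2 xᵀ w = −k ‖P_a(M R)‖_F²`
(with `‖A‖_F² = tr(Aᵀ A)`). -/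
theorem lyapunov_derivative_identity
    (M R : Matrix (Fin 3) (Fin 3) ℝ) (x : Fin 3 → ℝ) (k : ℝ)
    (w : Fin 3 → ℝ) (hw : crossMat w = antiProj (M * R)) :
    ((-R) * (crossMat x - k • antiProj (M * R)) * M).trace - 2 * (x ⬝ᵥ w) =
      -k * ((antiProj (M * R))ᵀ * antiProj (M * R)).trace := by
  have h0 := congrFun (congrFun hw 2) 1
  have h1 := congrFun (congrFun hw 0) 2
  have h2 := congrFun (congrFun hw 1) 0
  simp [crossMat, antiProj, Matrix.mul_apply, Fin.sum_univ_three, Matrix.transpose_apply] at h0 h1 h2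
  simp [crossMat, antiProj, Matrix.trace, Matrix.diag, Matrix.mul_apply, Fin.sum_univ_three,
    Matrix.transpose_apply, dotProduct, Matrix.sub_apply, Matrix.smul_apply, Matrix.neg_apply]
  linear_combination (-2 * x 0) * h0 + (-2 * x 1) * h1 + (-2 * x 2) * h2
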